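/- Under the assumptions of the preceding lemma (v(t) = d/dt ψ(x(t)) satisfies |v(t)-v(γ⁻)| ≤ C|t-γ| for t < γ), if u has only one collision at γ with v(γ⁻) < 0, and u is smooth for t < γ, then ψ(x(t)) is monotone decreasing on (γ + v(γ⁻)/C, γ) and for all t in that interval, ψ(x(t)) - v(γ⁻)(t-γ) ∈ [-(C/2)(t-γ)², (C/2)(t-γ)²]. In particular ψ(x(t)) ≥ (-v(γ⁻)/2)(γ - t) for t ≥ γ + v(γ⁻)/C. -/

import Mathlib

open Set Filter Topology
/-- local behaviour of `ψ(x(t))` before the collision.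
If `v(t) = d/dt ψ(x(t))` satisfies `|v(t) - v(γ⁻)| ≤ C|t - γ|` for `t < γ`,
the (unique) collision happens at `γ` (`ψ(x(t)) → 0` as `t → γ⁻`), and
`vγ = v(γ⁻) < 0`, then `ψ ∘ x` is monotone decreasing on `(γ + vγ/C, γ)`,
`ψ(x(t)) - vγ (t-γ) ∈ [-(C/2)(t-γ)², (C/2)(t-γ)²]` there, and
`ψ(x(t)) ≥ (-vγ/2)(γ - t)` for `t ≥ γ + vγ/C`. -/
theorem stmt4 {m : ℕ} (γ C vγ : ℝ) (hC : 0 < C) (hv : vγ < 0)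
    (ψ : EuclideanSpace ℝ (Fin m) → ℝ) (x : ℝ → EuclideanSpace ℝ (Fin m)) (v : ℝ → ℝ)
    (hder : ∀ t < γ, HasDerivAt (fun s => ψ (x s)) (v t) t)
    (hest : ∀ t < γ, |v t - vγ| ≤ C * |t - γ|)
    (hlim : Tendsto (fun t => ψ (x t)) (𝓝[<] γ) (𝓝 0)) :
    AntitoneOn (fun t => ψ (x t)) (Ioo (γ + vγ / C) γ) ∧
    (∀ t ∈ Ioo (γ + vγ / C) γ,
      |ψ (x t) - vγ * (t - γ)| ≤ C / 2 * (t - γ) ^ 2) ∧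
    (∀ t ∈ Ico (γ + vγ / C) γ, (-vγ / 2) * (γ - t) ≤ ψ (x t)) := by
  have hcont : ContinuousOn (fun s => ψ (x s)) (Iio γ) := fun s hs =>
    ((hder s hs).continuousAt).continuousWithinAt
  have hestlin : ∀ t < γ, C * (t - γ) ≤ v t - vγ ∧ v t - vγ ≤ C * (γ - t) := by
    intro t ht
    have h := hest t ht
    rw [abs_of_nonpos (by linarith : t - γ ≤ 0)] at h
    have h2 := abs_le.mp h
    constructor <;> [linarith [h2.1]; linarith [h2.2]]
  have hpoly : ∀ s : ℝ, HasDerivAt (fun s => vγ * (s - γ) + C / 2 * (s - γ) ^ 2)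
      (vγ + C * (s - γ)) s := by
    intro s
    have h1 : HasDerivAt (fun s : ℝ => s - γ) 1 s := (hasDerivAt_id s).sub_const γ
    have := ((h1.const_mul vγ).add ((h1.pow 2).const_mul (C / 2)))
    refine this.congr_deriv ?_
    push_cast
    ring
  have hpoly' : ∀ s : ℝ, HasDerivAt (fun s => vγ * (s - γ) - C / 2 * (s - γ) ^ 2)
      (vγ - C * (s - γ)) s := by
    intro s
    have h1 : HasDerivAt (fun s : ℝ => s - γ) 1 s := (hasDerivAt_id s).sub_const γ
    have := ((h1.const_mul vγ).sub ((h1.pow 2).const_mul (C / 2)))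
    refine this.congr_deriv ?_
    push_cast
    ring
  have hkey : ∀ t < γ, |ψ (x t) - vγ * (t - γ)| ≤ C / 2 * (t - γ) ^ 2 := by
    intro t ht
    set fp := fun s => ψ (x s) - (vγ * (s - γ) + C / 2 * (s - γ) ^ 2) with hfp
    set fm := fun s => ψ (x s) - (vγ * (s - γ) - C / 2 * (s - γ) ^ 2) with hfm
    have hc1 : Continuous (fun s : ℝ => vγ * (s - γ) + C / 2 * (s - γ) ^ 2) := by continuity
    have hc2 : Continuous (fun s : ℝ => vγ * (s - γ) - C / 2 * (s - γ) ^ 2) := by continuity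
    have hpolyc : Tendsto (fun s : ℝ => vγ * (s - γ) + C / 2 * (s - γ) ^ 2) (𝓝[<] γ) (𝓝 0) := by
      have := (hc1.tendsto γ).mono_left (nhdsWithin_le_nhds (s := Iio γ))
      simpa using this
    have hpolyc' : Tendsto (fun s : ℝ => vγ * (s - γ) - C / 2 * (s - γ) ^ 2) (𝓝[<] γ) (𝓝 0) := by
      have := (hc2.tendsto γ).mono_left (nhdsWithin_le_nhds (s := Iio γ))
      simpa using this
    have hfplim : Tendsto fp (𝓝[<] γ) (𝓝 0) := by simpa using hlim.sub hpolyc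
    have hfmlim : Tendsto fm (𝓝[<] γ) (𝓝 0) := by simpa using hlim.sub hpolyc'
    have hfpmono : MonotoneOn fp (Iio γ) := by
      apply monotoneOn_of_deriv_nonneg (convex_Iio γ)
      · exact hcont.sub hc1.continuousOn
      · rw [interior_Iio]
        exact fun s hs =>
          ((hder s hs).sub (hpoly s)).differentiableAt.differentiableWithinAt
      · rw [interior_Iio]
        intro s hs
        rw [show deriv fp s = _ from ((hder s hs).sub (hpoly s)).deriv]
        linarith [(hestlin s hs).1]
    have hfmanti : AntitoneOn fm (Iio γ) := by
      apply antitoneOn_of_deriv_nonpos (convex_Iio γ)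
      · exact hcont.sub hc2.continuousOn
      · rw [interior_Iio]
        exact fun s hs =>
          ((hder s hs).sub (hpoly' s)).differentiableAt.differentiableWithinAt
      · rw [interior_Iio]
        intro s hs
        rw [show deriv fm s = _ from ((hder s hs).sub (hpoly' s)).deriv]
        linarith [(hestlin s hs).2]
    have hup : fp t ≤ 0 := by
      refine ge_of_tendsto hfplim ?_
      filter_upwards [Ioo_mem_nhdsLT ht] with s hs
      exact hfpmono (mem_Iio.mpr ht) (mem_Iio.mpr hs.2) hs.1.le
    have hlow : 0 ≤ fm t := by
      refine le_of_tendsto hfmlim ?_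
      filter_upwards [Ioo_mem_nhdsLT ht] with s hs
      exact hfmanti (mem_Iio.mpr ht) (mem_Iio.mpr hs.2) hs.1.le
    rw [abs_le]
    constructor
    · simp only [hfm] at hlow; nlinarith
    · simp only [hfp] at hup; nlinarith
  refine ⟨?_, fun t ht => hkey t ht.2, ?_⟩
  · apply antitoneOn_of_deriv_nonpos (convex_Ioo _ _)
    · exact hcont.mono (fun s hs => hs.2)
    · rw [interior_Ioo]
      exact fun s hs => (hder s hs.2).differentiableAt.differentiableWithinAt
    · rw [interior_Ioo]
      intro s hs
      rw [(hder s hs.2).deriv]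
      have h2 := (hestlin s hs.2).2
      have h4 : vγ / C < s - γ := by linarith [hs.1]
      have h5 : vγ < (s - γ) * C := (div_lt_iff₀ hC).mp h4
      linarith
  · intro t ht
    have hb := (abs_le.mp (hkey t ht.2)).1
    have h4 : vγ / C ≤ t - γ := by linarith [ht.1]
    have hr : vγ ≤ (t - γ) * C := (div_le_iff₀ hC).mp h4
    have hr0 : 0 < γ - t := by linarith [ht.2]
    nlinarith [mul_le_mul_of_nonneg_right hr hr0.le, sq_nonneg (t - γ)]
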